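/- Let N > 1. For every ε > 0 there exists δ̄ > 0, depending only on N and ε, such that for every δ ∈ (0, δ̄), setting c = δ^{−1/2}, one has (∫₀^{(c+1)δ} (sin t)^{N−1} dt) / (∫₀^{cδ} (sin t)^{N−1} dt) ≤ 1 + (2N + ε)·δ^{1/2}; equivalently Vol_{N−1,N}((c+1)δ)/Vol_{N−1,N}(cδ) ≤ ((c+2)/c)^N = 1 + 2N δ^{1/2} + o(δ^{1/2}). -/

import Mathlib

open MeasureTheory Filter Set

/-- The function `s_κ`. -/
noncomputable def sK (κ θ : ℝ) : ℝ :=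
  if 0 < κ then Real.sin (Real.sqrt κ * θ) / Real.sqrt κ
  else if κ = 0 then θ
  else Real.sinh (Real.sqrt (-κ) * θ) / Real.sqrt (-κ)

/-- `k_D = ∫₀^D s_κ(t)^(N-1) dt`. -/
noncomputable def kD (κ N D : ℝ) : ℝ := ∫ t in (0:ℝ)..D, sK κ t ^ (N - 1)

/-- The function `f_{K,N,D}` (with `K = κ(N-1)`). -/
noncomputable def fKND (κ N D x : ℝ) : ℝ :=
  ((∫ y in (0:ℝ)..x, (sK κ (D - y) / sK κ (D - x)) ^ (N - 1)) +
    ∫ y in x..D, (sK κ y / sK κ x) ^ (N - 1))⁻¹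

/-- The model density `h^a_{K,N,D}` (with `K = κ(N-1)`). -/
noncomputable def hKND (κ N D a x : ℝ) : ℝ :=
  if x ≤ a then fKND κ N D a * (sK κ (D - x) / sK κ (D - a)) ^ (N - 1)
  else fKND κ N D a * (sK κ x / sK κ a) ^ (N - 1)

/-- The volume map `v_{K,N,D}(a) = ∫₀^a h^a_{K,N,D}`. -/
noncomputable def vKND (κ N D a : ℝ) : ℝ := ∫ x in (0:ℝ)..a, hKND κ N D a x

/-- `ω_N = π^(N/2)/Γ(N/2+1)`. -/
noncomputable def omegaN (N : ℝ) : ℝ := Real.pi ^ (N / 2) / Real.Gamma (N / 2 + 1)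

/-- `Vol_{K,N}(r) = N ω_N ∫₀^r s_κ(t)^(N-1) dt` (with `K = κ(N-1)`). -/
noncomputable def VolKN (κ N r : ℝ) : ℝ := N * omegaN N * ∫ t in (0:ℝ)..r, sK κ t ^ (N - 1)

/-- The coefficient `σ^{(s)}_{K,N-1}(θ)`, valued in `[0,∞]`. -/
noncomputable def sigmaE (K N s θ : ℝ) : ENNReal :=
  if (N - 1) * Real.pi ^ 2 ≤ K * θ ^ 2 then ⊤
  else ENNReal.ofReal (sK (K / (N - 1)) (s * θ) / sK (K / (N - 1)) θ)

/-- A nonnegative continuous function `h` on the interval `I` is an `MCP(K,N)` density. -/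
def IsMCPDensity (K N : ℝ) (I : Set ℝ) (h : ℝ → ℝ) : Prop :=
  ContinuousOn h I ∧ (∀ x ∈ I, 0 ≤ h x) ∧
    ∀ x₀ ∈ I, ∀ x₁ ∈ I, ∀ t ∈ Set.Icc (0:ℝ) 1,
      sigmaE K N (1 - t) |x₁ - x₀| ^ (N - 1) * ENNReal.ofReal (h x₀) ≤
        ENNReal.ofReal (h (t * x₁ + (1 - t) * x₀))

/-- The measure `h·𝓛¹` restricted to `[0,D]`. -/
noncomputable def mcMeasure (D : ℝ) (h : ℝ → ℝ) : Measure ℝ :=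
  (volume.restrict (Set.Icc 0 D)).withDensity fun x => ENNReal.ofReal (h x)

/-- The outer Minkowski content `μ⁺(E) = liminf_{ρ→0⁺} (μ(E^ρ) - μ(E))/ρ`. -/
noncomputable def minkContent (μ : Measure ℝ) (E : Set ℝ) : ℝ :=
  Filter.liminf (fun ρ : ℝ => ((μ (Metric.thickening ρ E)).toReal - (μ E).toReal) / ρ)
    (nhdsWithin 0 (Set.Ioi 0))

set_option maxHeartbeats 1000000 in
/-- with `c = δ^(-1/2)`,
`(∫₀^((c+1)δ) sin^(N-1))/(∫₀^(cδ) sin^(N-1)) ≤ 1 + (2N+ε)δ^(1/2)` for small `δ`. -/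
theorem stmt14 (N : ℝ) (hN : 1 < N) :
    ∀ ε > 0, ∃ δbar > 0, ∀ δ ∈ Set.Ioo (0:ℝ) δbar,
      (∫ t in (0:ℝ)..((δ ^ (-(1 / 2) : ℝ) + 1) * δ), Real.sin t ^ (N - 1)) /
        (∫ t in (0:ℝ)..(δ ^ (-(1 / 2) : ℝ) * δ), Real.sin t ^ (N - 1)) ≤
        1 + (2 * N + ε) * δ ^ ((1 : ℝ) / 2) := by
  intro ε hε
  have hN1 : (0:ℝ) < N - 1 := by linarith
  set g : ℝ → ℝ := fun s => (1+s) ^ (N-1) - 2*(1-s^2/4) ^ (N-1) with hg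
  have hcont : ContinuousAt g 0 := by
    apply ContinuousAt.sub
    · exact (by fun_prop : ContinuousAt (fun s : ℝ => 1 + s) 0).rpow_const
        (by norm_num)
    · exact ContinuousAt.mul continuousAt_const
        ((by fun_prop : ContinuousAt (fun s : ℝ => 1 - s^2/4) 0).rpow_const (by norm_num))
  have hg0 : g 0 < 0 := by
    simp only [hg]
    norm_num
  have hev : {s : ℝ | g s < 0} ∈ nhds (0:ℝ) := by
    have := hcont (Iio_mem_nhds hg0)
    exact this
  obtain ⟨η, hη, hball⟩ := Metric.mem_nhds_iff.1 hev
  refine ⟨min (η^2) (1/4), by positivity, ?_⟩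
  rintro δ ⟨hδ0, hδlt⟩
  set s := δ ^ ((1:ℝ)/2) with hs
  have hs0 : 0 < s := Real.rpow_pos_of_pos hδ0 _
  have hs2 : s ^ 2 = δ := by
    rw [hs, ← Real.rpow_natCast (δ ^ ((1:ℝ)/2)) 2, ← Real.rpow_mul hδ0.le]
    norm_num
  clear_value s
  have hsη : s < η := by
    have h1 : δ < η ^ 2 := lt_of_lt_of_le hδlt (min_le_left _ _)
    nlinarith
  have hshalf : s < 1/2 := by
    have h1 : δ < 1/4 := lt_of_lt_of_le hδlt (min_le_right _ _)
    nlinarith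
  have hgs : g s < 0 := hball (by simpa [abs_of_pos hs0] using hsη)
  have hb1 : δ ^ (-(1 / 2) : ℝ) * δ = s := by
    rw [hs]
    nth_rewrite 2 [← Real.rpow_one δ]
    rw [← Real.rpow_add hδ0]
    norm_num
  have hb2 : (δ ^ (-(1 / 2) : ℝ) + 1) * δ = s + s^2 := by
    rw [add_mul, hb1, one_mul, ← hs2]
  rw [hb1, hb2]
  have hcontf : Continuous (fun t : ℝ => Real.sin t ^ (N-1)) := by
    rw [continuous_iff_continuousAt]
    intro x
    exact (Real.continuousAt_rpow_const _ _ (Or.inr hN1.le)).comp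
      Real.continuous_sin.continuousAt
  have hint : ∀ a b : ℝ, IntervalIntegrable (fun t : ℝ => Real.sin t ^ (N-1)) volume a b :=
    fun a b => hcontf.intervalIntegrable a b
  have hA : 0 < ∫ t in (0:ℝ)..s, Real.sin t ^ (N-1) := by
    apply intervalIntegral.intervalIntegral_pos_of_pos_on (hint 0 s) _ hs0
    intro x hx
    apply Real.rpow_pos_of_pos
    apply Real.sin_pos_of_pos_of_lt_pi hx.1
    calc x < s := hx.2
    _ < Real.pi := by linarith [Real.pi_gt_three]
  rw [div_le_iff₀ hA]
  have hsplit : (∫ t in (0:ℝ)..(s+s^2), Real.sin t ^ (N-1)) =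
      (∫ t in (0:ℝ)..s, Real.sin t ^ (N-1)) + ∫ t in s..(s+s^2), Real.sin t ^ (N-1) :=
    (intervalIntegral.integral_add_adjacent_intervals (hint 0 s) (hint s (s+s^2))).symm
  rw [hsplit, add_mul, one_mul]
  gcongr
  -- upper bound on the increment
  have hub : (∫ t in s..(s+s^2), Real.sin t ^ (N-1)) ≤ s^2 * (s+s^2) ^ (N-1) := by
    have hm := intervalIntegral.integral_mono_on (μ := volume)
      (f := fun t : ℝ => Real.sin t ^ (N-1))
      (g := fun _ : ℝ => (s+s^2) ^ (N-1)) (by nlinarith) (hint s (s+s^2))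
      intervalIntegrable_const ?_
    · rw [intervalIntegral.integral_const, smul_eq_mul] at hm
      calc (∫ t in s..(s+s^2), Real.sin t ^ (N-1)) ≤ (s + s^2 - s) * (s+s^2) ^ (N-1) := hm
      _ = s^2 * (s+s^2) ^ (N-1) := by ring
    · intro x hx
      apply Real.rpow_le_rpow (Real.sin_nonneg_of_nonneg_of_le_pi (by nlinarith [hx.1]) ?_)
        ?_ hN1.le
      · calc x ≤ s + s^2 := hx.2
        _ ≤ Real.pi := by nlinarith [Real.pi_gt_three]
      · calc Real.sin x ≤ x := Real.sin_le (by nlinarith [hx.1])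
        _ ≤ s + s^2 := hx.2
  -- lower bound on A
  have hc : (0:ℝ) < 1 - s^2/4 := by nlinarith
  have hlb : (1 - s^2/4) ^ (N-1) * (s ^ N / N) ≤ ∫ t in (0:ℝ)..s, Real.sin t ^ (N-1) := by
    have hintt : IntervalIntegrable (fun t : ℝ => (1-s^2/4) ^ (N-1) * t ^ (N-1)) volume 0 s := by
      apply Continuous.intervalIntegrable
      apply continuous_const.mul
      rw [continuous_iff_continuousAt]
      intro x
      exact Real.continuousAt_rpow_const _ _ (Or.inr hN1.le)
    have hmono := intervalIntegral.integral_mono_on (μ := volume)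
      (f := fun t : ℝ => (1-s^2/4) ^ (N-1) * t ^ (N-1))
      (g := fun t : ℝ => Real.sin t ^ (N-1)) hs0.le hintt (hint 0 s) ?_
    · calc (1 - s^2/4) ^ (N-1) * (s ^ N / N)
          = ∫ t in (0:ℝ)..s, (1-s^2/4) ^ (N-1) * t ^ (N-1) := by
            rw [intervalIntegral.integral_const_mul, integral_rpow (Or.inl (by linarith))]
            rw [Real.zero_rpow (by linarith)]
            have eN : N - 1 + 1 = N := by ring
            rw [eN]
            ring
      _ ≤ _ := hmono
    · intro x hx
      show (1 - s^2/4) ^ (N-1) * x ^ (N-1) ≤ Real.sin x ^ (N-1)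
      rcases eq_or_lt_of_le hx.1 with h0 | h0
      · rw [← h0, Real.zero_rpow (by linarith : N - 1 ≠ 0), mul_zero]
        exact Real.rpow_nonneg (by simp) _
      · rw [← Real.mul_rpow hc.le h0.le]
        apply Real.rpow_le_rpow (mul_nonneg hc.le h0.le) ?_ hN1.le
        have hcube := Real.sin_gt_sub_cube h0
        nlinarith [hcube, mul_nonneg (mul_nonneg h0.le (sub_nonneg.2 hx.2))
          (by linarith [hx.1, hx.2] : (0:ℝ) ≤ s + x)]
  calc (∫ t in s..(s+s^2), Real.sin t ^ (N-1)) ≤ s^2 * (s+s^2) ^ (N-1) := hub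
  _ ≤ (2*N+ε) * s * ((1 - s^2/4) ^ (N-1) * (s ^ N / N)) := by
      have hkey : (1+s) ^ (N-1) ≤ 2 * (1-s^2/4) ^ (N-1) := by
        simp only [hg] at hgs; linarith
      have e1 : s + s^2 = s * (1+s) := by ring
      rw [e1, Real.mul_rpow hs0.le (by linarith)]
      have e3 : s ^ N = s ^ (N-1) * s := by
        rw [← Real.rpow_add_one hs0.ne' (N-1)]
        ring_nf
      rw [e3]
      have hsp : (0:ℝ) ≤ s ^ (N-1) := Real.rpow_nonneg hs0.le _
      have hcp : (0:ℝ) ≤ (1-s^2/4) ^ (N-1) := Real.rpow_nonneg hc.le _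
      have e4 : (2*N+ε) * s * ((1 - s^2/4) ^ (N-1) * (s ^ (N-1) * s / N)) =
          ((2*N+ε)/N) * (s^2 * (s ^ (N-1) * (1 - s^2/4) ^ (N-1))) := by ring
      have e5 : s^2 * (s ^ (N-1) * (1+s) ^ (N-1)) ≤
          s^2 * (s ^ (N-1) * (2 * (1-s^2/4) ^ (N-1))) := by gcongr
      rw [e4]
      refine e5.trans ?_
      have h2 : (2:ℝ) ≤ (2*N+ε)/N := by
        rw [le_div_iff₀ (by linarith : (0:ℝ) < N)]
        linarith
      calc s^2 * (s ^ (N-1) * (2 * (1-s^2/4) ^ (N-1)))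
          = 2 * (s^2 * (s ^ (N-1) * (1-s^2/4) ^ (N-1))) := by ring
      _ ≤ ((2*N+ε)/N) * (s^2 * (s ^ (N-1) * (1-s^2/4) ^ (N-1))) := by
          apply mul_le_mul_of_nonneg_right h2 (by positivity)
  _ ≤ (2*N+ε) * s * (∫ t in (0:ℝ)..s, Real.sin t ^ (N-1)) := by
      apply mul_le_mul_of_nonneg_left hlb (by positivity)
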